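/- Let G ∈ ℝ^{N×N} be symmetric positive definite, let A ∈ ℝ^{N×N} satisfy GᵀA + AᵀG − 2GᵀG ≺ 0, let c ≥ 0, let λ_m > 0, let λ ≥ λ_m, and let ω ≥ (1/λ_m)·(1 + c/(λ_m·λmin(GᵀG))). Then λ·(GᵀA − ωλ·GᵀG) + c·I_N ≺ 0, i.e., xᵀ[λ(GᵀA − ωλGᵀG) + cI_N]x < 0 for every nonzero x ∈ ℝ^N. -/

import Mathlib

open Matrix

/-- Smallest real eigenvalue of a real square matrix. -/
noncomputable def lmin {n : Type*} [Fintype n] (M : Matrix n n ℝ) : ℝ :=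
  sInf {μ : ℝ | ∃ x : n → ℝ, x ≠ 0 ∧ M.mulVec x = μ • x}

private lemma dot_shift {N : ℕ} (M : Matrix (Fin N) (Fin N) ℝ) (x y : Fin N → ℝ) :
    x ⬝ᵥ (M *ᵥ y) = (Mᵀ *ᵥ x) ⬝ᵥ y := by
  rw [dotProduct_mulVec, mulVec_transpose]

private lemma dot_self_pos {N : ℕ} {x : Fin N → ℝ} (hx : x ≠ 0) : 0 < x ⬝ᵥ x := by
  rcases lt_or_eq_of_le (Finset.sum_nonneg fun i _ => mul_self_nonneg (x i) :
      (0:ℝ) ≤ x ⬝ᵥ x) with h | h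
  · exact h
  · exact absurd (dotProduct_self_eq_zero.mp h.symm) hx

private lemma rayleigh_lmin {N : ℕ} (hN : 0 < N) (Q : Matrix (Fin N) (Fin N) ℝ)
    (hQ : Q.PosDef) :
    0 < lmin Q ∧ ∀ x : Fin N → ℝ, lmin Q * (x ⬝ᵥ x) ≤ x ⬝ᵥ (Q *ᵥ x) := by
  haveI : Nonempty (Fin N) := ⟨⟨0, hN⟩⟩
  have hH := hQ.1
  obtain ⟨i0, -, hi0⟩ := Finset.exists_min_image Finset.univ hH.eigenvalues
    ⟨Classical.arbitrary _, Finset.mem_univ _⟩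
  set l0 := hH.eigenvalues i0 with hl0def
  have hl0pos : 0 < l0 := hQ.eigenvalues_pos i0
  set U : Matrix (Fin N) (Fin N) ℝ := (hH.eigenvectorUnitary : Matrix (Fin N) (Fin N) ℝ) with hUdef
  have hUT : Uᵀ = star U := by
    rw [star_eq_conjTranspose, conjTranspose_eq_transpose_of_trivial]
  have hU1 : U * star U = 1 := mem_unitaryGroup_iff.mp hH.eigenvectorUnitary.2
  have hray : ∀ x : Fin N → ℝ, l0 * (x ⬝ᵥ x) ≤ x ⬝ᵥ (Q *ᵥ x) := by
    intro x
    set y := star U *ᵥ x with hy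
    have h1 : x ⬝ᵥ (Q *ᵥ x) = ∑ i, hH.eigenvalues i * (y i) ^ 2 := by
      conv_lhs => rw [hH.spectral_theorem, Unitary.conjStarAlgAut_apply, mul_assoc, ← mulVec_mulVec, ← mulVec_mulVec]
      rw [dot_shift, hUT, ← hy]
      simp only [dotProduct, mulVec_diagonal, RCLike.ofReal_real_eq_id, Function.comp_apply,
        id_eq]
      exact Finset.sum_congr rfl fun i _ => by ring
    have h2 : x ⬝ᵥ x = ∑ i, (y i) ^ 2 := by
      have : y ⬝ᵥ y = x ⬝ᵥ x := by
        rw [hy, dot_shift, ← hUT, transpose_transpose, mulVec_mulVec, hUT, hU1, one_mulVec]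
      rw [← this]
      simp [dotProduct, pow_two]
    rw [h1, h2, Finset.mul_sum]
    refine Finset.sum_le_sum fun i _ => ?_
    exact mul_le_mul_of_nonneg_right (hi0 i (Finset.mem_univ i)) (sq_nonneg _)
  have hmem : l0 ∈ {μ : ℝ | ∃ x : Fin N → ℝ, x ≠ 0 ∧ Q.mulVec x = μ • x} := by
    refine ⟨⇑(hH.eigenvectorBasis i0), ?_, hH.mulVec_eigenvectorBasis i0⟩
    have := hH.eigenvectorBasis.orthonormal.ne_zero i0
    intro h
    apply this
    ext i
    exact congrFun h i
  have hlb : ∀ μ ∈ {μ : ℝ | ∃ x : Fin N → ℝ, x ≠ 0 ∧ Q.mulVec x = μ • x}, l0 ≤ μ := by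
    rintro μ ⟨x, hx, hxeq⟩
    have hxx : 0 < x ⬝ᵥ x := dot_self_pos hx
    have := hray x
    rw [hxeq] at this
    simp only [dotProduct_smul, smul_eq_mul] at this
    exact le_of_mul_le_mul_right this hxx
  have : lmin Q = l0 :=
    le_antisymm (csInf_le ⟨l0, hlb⟩ hmem) (le_csInf ⟨l0, hmem⟩ hlb)
  rw [this]
  exact ⟨hl0pos, hray⟩

/-- Block-wise negative definiteness estimate: if `GᵀA + AᵀG − 2GᵀG ≺ 0`, `c ≥ 0`,
`λ ≥ λ_m > 0` and `ω ≥ (1/λ_m)(1 + c/(λ_m λmin(GᵀG)))`, then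
`λ(GᵀA − ωλ GᵀG) + c I ≺ 0`. -/
theorem stmt6 {N : ℕ} (G A : Matrix (Fin N) (Fin N) ℝ)
    (hG : G.PosDef)
    (hGA : ∀ x : Fin N → ℝ, x ≠ 0 →
      x ⬝ᵥ (Gᵀ * A + Aᵀ * G - (2 : ℝ) • (Gᵀ * G)).mulVec x < 0)
    (c : ℝ) (hc : 0 ≤ c) (lam lamm : ℝ) (hlamm : 0 < lamm) (hlam : lamm ≤ lam)
    (ω : ℝ) (hω : (1 / lamm) * (1 + c / (lamm * lmin (Gᵀ * G))) ≤ ω) :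
    ∀ x : Fin N → ℝ, x ≠ 0 →
      x ⬝ᵥ (lam • (Gᵀ * A - (ω * lam) • (Gᵀ * G))
            + c • (1 : Matrix (Fin N) (Fin N) ℝ)).mulVec x < 0 := by
  intro x hx
  rcases Nat.eq_zero_or_pos N with h0 | hN
  · exact absurd (funext fun i => (h0 ▸ i : Fin 0).elim0) hx
  -- GᵀG is positive definite
  have hdet : IsUnit G.det := hG.det_pos.ne'.isUnit
  have hQpd : (Gᵀ * G).PosDef := by
    refine posDef_iff_dotProduct_mulVec.mpr ⟨by simpa [conjTranspose_eq_transpose_of_trivial] using isHermitian_conjTranspose_mul_self G, fun z hz => ?_⟩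
    have hGz : G *ᵥ z ≠ 0 := by
      intro h
      apply hz
      have : (G⁻¹ * G) *ᵥ z = z := by rw [nonsing_inv_mul G hdet, one_mulVec]
      rw [← this, ← mulVec_mulVec, h, mulVec_zero]
    have : star z ⬝ᵥ ((Gᵀ * G) *ᵥ z) = (G *ᵥ z) ⬝ᵥ (G *ᵥ z) := by
      rw [star_trivial, ← mulVec_mulVec, dot_shift, transpose_transpose]
    rw [this]
    exact dot_self_pos hGz
  obtain ⟨hμpos, hray⟩ := rayleigh_lmin hN (Gᵀ * G) hQpd
  set μ := lmin (Gᵀ * G) with hμdef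
  set s := x ⬝ᵥ x with hsdef
  set P := x ⬝ᵥ ((Gᵀ * G) *ᵥ x) with hPdef
  have hs : 0 < s := dot_self_pos hx
  have hP : μ * s ≤ P := hray x
  set t := x ⬝ᵥ ((Gᵀ * A) *ᵥ x) with htdef
  -- t < P
  have hsym : x ⬝ᵥ ((Aᵀ * G) *ᵥ x) = t := by
    rw [htdef, dot_shift, transpose_mul, transpose_transpose, dotProduct_comm]
  have ht : t < P := by
    have := hGA x hx
    simp only [sub_mulVec, add_mulVec, smul_mulVec, dotProduct_sub, dotProduct_add,
      dotProduct_smul, smul_eq_mul] at this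
    rw [hsym] at this
    rw [← hPdef] at this
    linarith
  -- goal expansion
  have hgoal : x ⬝ᵥ ((lam • (Gᵀ * A - (ω * lam) • (Gᵀ * G))
      + c • (1 : Matrix (Fin N) (Fin N) ℝ)) *ᵥ x)
      = lam * (t - ω * lam * P) + c * s := by
    simp only [add_mulVec, smul_mulVec, sub_mulVec, one_mulVec, dotProduct_add,
      dotProduct_smul, dotProduct_sub, smul_eq_mul, htdef, hPdef, hsdef]
  show x ⬝ᵥ ((lam • (Gᵀ * A - (ω * lam) • (Gᵀ * G))
      + c • (1 : Matrix (Fin N) (Fin N) ℝ)) *ᵥ x) < 0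
  rw [hgoal]
  -- arithmetic
  have hlam0 : 0 < lam := lt_of_lt_of_le hlamm hlam
  have h1 : 1 + c / (lamm * μ) ≤ ω * lamm := by
    rw [div_mul_eq_mul_div, div_le_iff₀ hlamm, one_mul] at hω
    linarith
  have hkey : lamm * μ + c ≤ ω * lamm * (lamm * μ) := by
    have hlm : 0 < lamm * μ := mul_pos hlamm hμpos
    have := mul_le_mul_of_nonneg_right h1 hlm.le
    rw [add_mul, one_mul, div_mul_cancel₀ _ hlm.ne'] at this
    linarith
  have hlmμ : 0 < lamm * μ := mul_pos hlamm hμpos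
  have hω0 : 0 ≤ ω := by nlinarith [mul_pos hlamm hlmμ, hkey, hc]
  have hωlm : 1 ≤ ω * lamm := by nlinarith [hlmμ, hkey, hc]
  have hωlam : ω * lamm ≤ ω * lam := mul_le_mul_of_nonneg_left hlam hω0
  have homega1 : 1 ≤ ω * lam := le_trans hωlm hωlam
  have hmain : c ≤ lam * μ * (ω * lam - 1) := by
    have h3 : c ≤ lamm * μ * (ω * lamm - 1) := by nlinarith [hkey]
    have h2 : lamm * μ * (ω * lamm - 1) ≤ lamm * μ * (ω * lam - 1) :=
      mul_le_mul_of_nonneg_left (by linarith) hlmμ.le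
    have h4 : lamm * μ * (ω * lam - 1) ≤ lam * μ * (ω * lam - 1) :=
      mul_le_mul_of_nonneg_right
        (mul_le_mul_of_nonneg_right hlam hμpos.le) (by linarith)
    linarith
  have hcs : c * s ≤ lam * (ω * lam - 1) * P := by
    have e1 : c * s ≤ lam * μ * (ω * lam - 1) * s := mul_le_mul_of_nonneg_right hmain hs.le
    have e2 : lam * (ω * lam - 1) * (μ * s) ≤ lam * (ω * lam - 1) * P :=
      mul_le_mul_of_nonneg_left hP (mul_nonneg hlam0.le (by linarith))
    nlinarith [e1, e2]
  nlinarith [mul_lt_mul_of_pos_left ht hlam0, hcs]
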